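/- arXiv:1410.8287 — 3 statements merged into one kernel-verified Lean document; each statement's English description precedes it below -/
import Mathlib

section
/- Fix natural numbers s, t, r. For each i = 0, …, r let αᵢ ∈ ℤ^s and βᵢ ∈ ℕ^t be exponent vectors, and assume β₀ = 0. Let D = {z ∈ ℂ^{s+t} : z₁ ≠ 0, …, z_s ≠ 0}, and for a = (a₀, …, a_r) ∈ ℂ^{r+1} define f_a : D → ℂ by f_a(z) = Σ_{i=0}^{r} aᵢ · (∏_{j=1}^{s} z_j^{αᵢ,ⱼ}) · (∏_{j=1}^{t} z_{s+j}^{βᵢ,ⱼ}), where the powers of z₁,…,z_s are integer powers (well-defined on D). Then the set of a ∈ ℂ^{r+1} for which there exists z ∈ D with f_a(z) = 0 and with all complex partial derivatives ∂f_a/∂z_j (j = 1, …, s+t) vanishing at z is contained in a Borel subset of ℂ^{r+1} of Lebesgue measure zero. In particular, for generic a the hypersurface {z ∈ D : f_a(z) = 0} is nonsingular. -/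
open MeasureTheory Module Topology


theorem loc_const_of_iteratedFDeriv_zero {E : Type} [NormedAddCommGroup E] [NormedSpace ℂ E]
    {g : E → ℂ} {p : E}
    (ha : AnalyticAt ℂ g p) (h0 : ∀ k, 1 ≤ k → iteratedFDeriv ℂ k g p = 0) :
    ∀ᶠ w in nhds p, g w = g p := by
  obtain ⟨P, r, hP⟩ := ha
  filter_upwards [EMetric.ball_mem_nhds p hP.r_pos] with w hw
  have hy : w - p ∈ Metric.eball (0 : E) r := by
    simpa [Metric.mem_eball, edist_eq_enorm_sub, edist_zero_right] using hw
  have hsum := hP.hasSum hy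
  rw [add_sub_cancel] at hsum
  have hzero : ∀ k, k ≠ 0 → (P k fun _ => w - p) = 0 := by
    intro k hk
    have h1 := hP.factorial_smul (w - p) k
    rw [h0 k (Nat.one_le_iff_ne_zero.mpr hk)] at h1
    have h2 : (k.factorial : ℂ) • (P k fun _ => w - p) = 0 := by
      rw [← Nat.cast_smul_eq_nsmul ℂ] at h1
      simpa using h1
    have h3 : (k.factorial : ℂ) ≠ 0 := Nat.cast_ne_zero.mpr k.factorial_ne_zero
    simpa [smul_eq_zero, h3] using h2
  have hcollapse := hasSum_single (f := fun k => P k fun _ => w - p) 0 (fun b hb => hzero b hb)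
  have heq := hsum.unique hcollapse
  rw [heq]
  exact hP.hasFPowerSeriesAt.coeff_zero _

theorem stratum_local (n : ℕ)
    (IH : ∀ (E : Type) [NormedAddCommGroup E] [NormedSpace ℂ E] [FiniteDimensional ℂ E],
      finrank ℂ E = n → ∀ (U : Set E), IsOpen U → ∀ (g : E → ℂ), AnalyticOnNhd ℂ g U →
      volume (g '' {z | z ∈ U ∧ fderiv ℂ g z = 0}) = 0)
    (E : Type) [NormedAddCommGroup E] [NormedSpace ℂ E] [FiniteDimensional ℂ E]
    (hrank : finrank ℂ E = n + 1) {U : Set E} (hU : IsOpen U) {g : E → ℂ}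
    (hg : AnalyticOnNhd ℂ g U) (i : ℕ) {p : E} (hpU : p ∈ U)
    {m : Fin (i + 2) → E} (hm : iteratedFDeriv ℂ (i + 2) g p m ≠ 0) :
    ∃ V : Set E, IsOpen V ∧ p ∈ V ∧
      volume (g '' ({z | z ∈ U ∧ fderiv ℂ g z = 0 ∧ iteratedFDeriv ℂ (i + 1) g z = 0} ∩ V))
        = 0 := by
  classical
  set Z := {z | z ∈ U ∧ fderiv ℂ g z = 0 ∧ iteratedFDeriv ℂ (i + 1) g z = 0} with hZ
  -- the auxiliary scalar function φ
  set Aclm := ContinuousMultilinearMap.apply ℂ (fun _ : Fin (i + 1) => E) ℂ (Fin.tail m) with hAclm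
  set φ : E → ℂ := fun z => Aclm (iteratedFDeriv ℂ (i + 1) g z) with hφ
  have hga : ∀ z ∈ U, AnalyticAt ℂ (iteratedFDeriv ℂ (i + 1) g) z := hg.iteratedFDeriv (i + 1)
  have hφa : AnalyticOnNhd ℂ φ U := fun z hz => (Aclm.analyticAt _).comp (hga z hz)
  have hd : DifferentiableAt ℂ (iteratedFDeriv ℂ (i + 1) g) p := (hga p hpU).differentiableAt
  set L : E →L[ℂ] ℂ := Aclm.comp (fderiv ℂ (iteratedFDeriv ℂ (i + 1) g) p) with hL
  have hφfd : HasFDerivAt φ L p := Aclm.hasFDerivAt.comp p hd.hasFDerivAt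
  have hLm0 : L (m 0) = iteratedFDeriv ℂ (i + 2) g p m := by
    rw [hL, iteratedFDeriv_succ_apply_left]
    simp only [hAclm, ContinuousLinearMap.coe_comp', Function.comp_apply,
      ContinuousMultilinearMap.apply_apply]
  have hLm0' : L (m 0) ≠ 0 := by rw [hLm0]; exact hm
  set v₀ : E := (L (m 0))⁻¹ • m 0 with hv₀def
  have hv₀ : L v₀ = 1 := by
    rw [hv₀def, _root_.map_smul, smul_eq_mul, inv_mul_cancel₀ hLm0']
  set K := LinearMap.ker (L : E →ₗ[ℂ] ℂ) with hK
  have hmemK : ∀ x, x ∈ K ↔ L x = 0 := fun x => LinearMap.mem_ker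
  -- rank computation
  have hKr : finrank ℂ ↥K = n := by
    have hr : LinearMap.range (L : E →ₗ[ℂ] ℂ) = ⊤ := by
      rw [LinearMap.range_eq_top]
      intro c
      exact ⟨c • v₀, by rw [ContinuousLinearMap.coe_coe, _root_.map_smul, hv₀, smul_eq_mul, mul_one]⟩
    have h2 := LinearMap.finrank_range_add_finrank_ker (L : E →ₗ[ℂ] ℂ)
    rw [hrank] at h2
    have hr' : LinearMap.range (L : E →ₗ[ℂ] ℂ) = ⊤ := by
      rw [LinearMap.range_eq_top]
      intro c
      exact ⟨c • v₀, by simp [hv₀]⟩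
    have hker' : LinearMap.ker (L : E →ₗ[ℂ] ℂ) = K := rfl
    rw [hr', hker', finrank_top, finrank_self] at h2
    omega
  -- the linear projection onto K
  set π₀ : E →L[ℂ] E := ContinuousLinearMap.id ℂ E - L.smulRight v₀ with hπ₀def
  have hπ₀app : ∀ x, π₀ x = x - L x • v₀ := fun x => rfl
  have hπ₀mem : ∀ x, π₀ x ∈ K := by
    intro x
    rw [hmemK, hπ₀app, map_sub, _root_.map_smul, hv₀, smul_eq_mul, mul_one, sub_self]
  set πK : E →L[ℂ] ↥K := π₀.codRestrict K hπ₀mem with hπKdef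
  have hπKapp : ∀ x, (πK x : E) = x - L x • v₀ := fun x => rfl
  set A : E →L[ℂ] ℂ × ↥K := L.prod πK with hA
  have hAapp : ∀ x, A x = (L x, πK x) := fun x => rfl
  have hker : LinearMap.ker (A : E →ₗ[ℂ] ℂ × ↥K) = ⊥ := by
    rw [Submodule.eq_bot_iff]
    intro x hx
    rw [LinearMap.mem_ker] at hx
    have h1 : L x = 0 := congrArg Prod.fst hx
    have h2 : (πK x : E) = 0 := by
      have := congrArg Prod.snd hx
      exact congrArg Subtype.val this
    rw [hπKapp, h1, zero_smul, sub_zero] at h2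
    exact h2
  have hsurj : LinearMap.range (A : E →ₗ[ℂ] ℂ × ↥K) = ⊤ := by
    rw [LinearMap.range_eq_top]
    rintro ⟨c, k⟩
    refine ⟨(k : E) + c • v₀, ?_⟩
    have hLk : L (k : E) = 0 := (hmemK _).mp k.2
    rw [ContinuousLinearMap.coe_coe, hAapp]
    refine Prod.ext ?_ (Subtype.ext ?_)
    · simp [hLk, hv₀]
    · rw [hπKapp, map_add, hLk, _root_.map_smul, hv₀, smul_eq_mul, mul_one, zero_add]
      simp
  set Aeq : E ≃L[ℂ] ℂ × ↥K := ContinuousLinearEquiv.ofBijective A hker hsurj with hAeq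
  have hAcoe : (Aeq : E →L[ℂ] ℂ × ↥K) = A := rfl
  -- the map to invert
  set Fm : E → ℂ × ↥K := fun z => (φ z, πK z) with hFm
  have hFmA : HasFDerivAt Fm A p := HasFDerivAt.prodMk hφfd πK.hasFDerivAt
  have hFana : AnalyticAt ℂ Fm p := (hφa p hpU).prod (πK.analyticAt p)
  have hstrict : HasStrictFDerivAt Fm (Aeq : E →L[ℂ] ℂ × ↥K) p := by
    rw [hAcoe]
    exact (hFana.contDiffAt (n := 1)).hasStrictFDerivAt' hFmA one_ne_zero
  set e := HasStrictFDerivAt.toOpenPartialHomeomorph Fm hstrict with he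
  have hecoe : (e : E → ℂ × ↥K) = Fm := rfl
  have hpsrc : p ∈ e.source := HasStrictFDerivAt.mem_toOpenPartialHomeomorph_source hstrict
  set ψ : ℂ × ↥K → E := ⇑e.symm with hψ
  have hψa : AnalyticAt ℂ ψ (Fm p) := by
    have hfde : fderiv ℂ (e : E → ℂ × ↥K) p = (Aeq : E →L[ℂ] ℂ × ↥K) := by
      rw [hecoe, hFmA.fderiv, hAcoe]
    have := e.analyticAt_symm' hpsrc (by rw [hecoe]; exact hFana) hfde
    rw [hecoe] at this
    exact this
  have hOmem : {q | AnalyticAt ℂ ψ q} ∈ nhds (Fm p) := hψa.eventually_analyticAt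
  set Oi := interior {q | AnalyticAt ℂ ψ q} with hOi
  have hOiopen : IsOpen Oi := isOpen_interior
  have hFmpOi : Fm p ∈ Oi := mem_interior_iff_mem_nhds.mpr hOmem
  have hψOi : ∀ q ∈ Oi, AnalyticAt ℂ ψ q := fun q hq => interior_subset (s := {q : ℂ × ↥K | AnalyticAt ℂ ψ q}) hq
  have hψc : ContinuousOn ψ Oi := fun q hq => (hψOi q hq).continuousAt.continuousWithinAt
  set Ω := Oi ∩ ψ ⁻¹' U with hΩdef
  have hΩ : IsOpen Ω := hψc.isOpen_inter_preimage hOiopen hU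
  have hψFmp : ψ (Fm p) = p := e.left_inv hpsrc
  have hFmpΩ : Fm p ∈ Ω := ⟨hFmpOi, by rw [Set.mem_preimage, hψFmp]; exact hpU⟩
  -- parametrization of the zero locus of φ
  set jK : ↥K →L[ℂ] ℂ × ↥K := ContinuousLinearMap.inr ℂ ℂ ↥K with hjK
  have hjKapp : ∀ k : ↥K, jK k = ((0 : ℂ), k) := fun k => rfl
  set W : Set ↥K := jK ⁻¹' Ω with hW
  have hWopen : IsOpen W := hΩ.preimage jK.continuous
  set ψ' : ↥K → ℂ := fun k => g (ψ (jK k)) with hψ'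
  have hψ'a : AnalyticOnNhd ℂ ψ' W := by
    intro k hk
    have h1 : jK k ∈ Ω := hk
    have h2 : AnalyticAt ℂ ψ (jK k) := hψOi _ h1.1
    have h3 : ψ (jK k) ∈ U := h1.2
    exact ((hg _ h3).comp h2).comp (jK.analyticAt k)
  have hFmc : ContinuousOn Fm U := (hφa.continuousOn).prodMk πK.continuous.continuousOn
  set V := e.source ∩ (U ∩ Fm ⁻¹' Ω) with hV
  have hVopen : IsOpen V := e.open_source.inter (hFmc.isOpen_inter_preimage hU hΩ)
  have hpV : p ∈ V := ⟨hpsrc, hpU, hFmpΩ⟩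
  refine ⟨V, hVopen, hpV, ?_⟩
  have hsubset : g '' (Z ∩ V) ⊆ ψ' '' {k | k ∈ W ∧ fderiv ℂ ψ' k = 0} := by
    rintro c ⟨z, ⟨⟨hzU, hzcrit, hzit⟩, hzsrc, hzU', hzΩ⟩, rfl⟩
    have hφz : φ z = 0 := by
      rw [hφ]; simp only [hzit]
      exact Aclm.map_zero
    have hFz : Fm z = jK (πK z) := by
      rw [hjKapp]
      exact Prod.ext hφz rfl
    have hψFmz : ψ (Fm z) = z := e.left_inv hzsrc
    have hkW : πK z ∈ W := by rw [hW, Set.mem_preimage, ← hFz]; exact hzΩ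
    have hψ'k : ψ (jK (πK z)) = z := by rw [← hFz]; exact hψFmz
    have hΩz : jK (πK z) ∈ Ω := by rw [← hFz]; exact hzΩ
    have hψd : DifferentiableAt ℂ ψ (jK (πK z)) := (hψOi _ hΩz.1).differentiableAt
    have hψ'd : DifferentiableAt ℂ (fun k => ψ (jK k)) (πK z) :=
      hψd.comp _ (jK.differentiableAt)
    have hgd : DifferentiableAt ℂ g (ψ (jK (πK z))) := by
      rw [hψ'k]; exact (hg z hzU).differentiableAt
    refine ⟨πK z, ⟨hkW, ?_⟩, by rw [hψ']; simp only [hψ'k]⟩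
    have hchain : fderiv ℂ ψ' (πK z) =
        (fderiv ℂ g (ψ (jK (πK z)))).comp (fderiv ℂ (fun k => ψ (jK k)) (πK z)) := by
      rw [hψ']
      exact fderiv_comp _ hgd hψ'd
    rw [hchain, hψ'k, hzcrit, ContinuousLinearMap.zero_comp]
  refine measure_mono_null hsubset ?_
  exact IH ↥K hKr W hWopen ψ' hψ'a


theorem fderiv_eq_zero_of_iteratedFDeriv_one {E : Type} [NormedAddCommGroup E]
    [NormedSpace ℂ E] {g : E → ℂ} {z : E} (h : iteratedFDeriv ℂ 1 g z = 0) :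
    fderiv ℂ g z = 0 := by
  ext w
  have := congrFun (congrArg DFunLike.coe h) (fun _ : Fin 1 => w)
  rw [iteratedFDeriv_one_apply] at this
  simpa using this

theorem iteratedFDeriv_one_eq_zero_of_fderiv {E : Type} [NormedAddCommGroup E]
    [NormedSpace ℂ E] {g : E → ℂ} {z : E} (h : fderiv ℂ g z = 0) :
    iteratedFDeriv ℂ 1 g z = 0 := by
  ext w
  rw [iteratedFDeriv_one_apply, h]
  simp

theorem critval_null (n : ℕ) :
    ∀ (E : Type) [NormedAddCommGroup E] [NormedSpace ℂ E] [FiniteDimensional ℂ E],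
      Module.finrank ℂ E = n → ∀ (U : Set E), IsOpen U → ∀ (g : E → ℂ), AnalyticOnNhd ℂ g U →
      volume (g '' {z | z ∈ U ∧ fderiv ℂ g z = 0}) = 0 := by
  induction n with
  | zero =>
    intro E _ _ _ hrank U hU g hg
    have hsub : Subsingleton E := (Module.finrank_zero_iff (R := ℂ)).mp hrank
    rcases Set.eq_empty_or_nonempty U with hUe | ⟨z₀, hz₀⟩
    · have : {z | z ∈ U ∧ fderiv ℂ g z = 0} = ∅ := by
        rw [Set.eq_empty_iff_forall_notMem]
        intro z hz
        rw [Set.eq_empty_iff_forall_notMem] at hUe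
        exact hUe z hz.1
      rw [this]; simp
    · have hsb : g '' {z | z ∈ U ∧ fderiv ℂ g z = 0} ⊆ {g z₀} := by
        rintro c ⟨z, _, rfl⟩
        rw [Subsingleton.elim z z₀]
        rfl
      exact measure_mono_null hsb (measure_singleton _)
  | succ n IH =>
    intro E _ _ _ hrank U hU g hg
    classical
    set Cr := {z | z ∈ U ∧ fderiv ℂ g z = 0} with hCrdef
    set Ci : ℕ → Set E :=
      fun i => {z | z ∈ U ∧ ∀ k, 1 ≤ k → k ≤ i → iteratedFDeriv ℂ k g z = 0} with hCidef
    set Cinf := {z | z ∈ U ∧ ∀ k, 1 ≤ k → iteratedFDeriv ℂ k g z = 0} with hCinfdef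
    -- decomposition of the critical set
    have hCr : Cr ⊆ Cinf ∪ ⋃ i : ℕ, (Ci (i + 1) \ Ci (i + 2)) := by
      intro z hz
      by_cases hc : ∀ k, 1 ≤ k → iteratedFDeriv ℂ k g z = 0
      · exact Or.inl ⟨hz.1, hc⟩
      · right
        push_neg at hc
        obtain ⟨k₀, hk₀1, hk₀⟩ := hc
        have hz1 : z ∈ Ci 1 := by
          refine ⟨hz.1, fun k h1 h2 => ?_⟩
          have : k = 1 := le_antisymm h2 h1
          rw [this]
          exact iteratedFDeriv_one_eq_zero_of_fderiv hz.2
        have hnot : ∃ j : ℕ, z ∉ Ci (j + 2) := by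
          have hk₀2 : 2 ≤ k₀ := by
            rcases Nat.lt_or_ge k₀ 2 with h | h
            · interval_cases k₀
              · exact absurd (hz1.2 1 le_rfl le_rfl) hk₀
            · exact h
          exact ⟨k₀ - 2, fun hmem => hk₀ (hmem.2 k₀ hk₀1 (by omega))⟩
        refine Set.mem_iUnion.mpr ⟨Nat.find hnot, ?_, Nat.find_spec hnot⟩
        rcases Nat.eq_zero_or_pos (Nat.find hnot) with h0 | hpos
        · rw [h0]; exact hz1
        · have hlt : Nat.find hnot - 1 < Nat.find hnot := by omega
          have hz2 : z ∈ Ci (Nat.find hnot - 1 + 2) := not_not.mp (Nat.find_min hnot hlt)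
          have heq : Nat.find hnot - 1 + 2 = Nat.find hnot + 1 := by omega
          rwa [heq] at hz2
    -- Part A: infinite-order critical points
    have hAnull : volume (g '' Cinf) = 0 := by
      have hloc : ∀ p ∈ Cinf, {w | g w = g p} ∈ nhdsWithin p Cinf := fun p hp =>
        nhdsWithin_le_nhds (loc_const_of_iteratedFDeriv_zero (hg p hp.1) hp.2)
      obtain ⟨t, hts, htc, hcov⟩ := TopologicalSpace.countable_cover_nhdsWithin hloc
      have hsb : g '' Cinf ⊆ ⋃ p ∈ t, {g p} := by
        rintro c ⟨z, hz, rfl⟩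
        obtain ⟨p, hpt, hzp⟩ := Set.mem_iUnion₂.mp (hcov hz)
        exact Set.mem_iUnion₂.mpr ⟨p, hpt, hzp⟩
      refine measure_mono_null hsb ?_
      exact (htc.biUnion fun p _ => Set.countable_singleton _).measure_zero _
    -- Part B: finite-order strata
    have hBnull : ∀ i : ℕ, volume (g '' (Ci (i + 1) \ Ci (i + 2))) = 0 := by
      intro i
      set s := Ci (i + 1) \ Ci (i + 2) with hs
      set Z := {z | z ∈ U ∧ fderiv ℂ g z = 0 ∧ iteratedFDeriv ℂ (i + 1) g z = 0} with hZdef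
      have hsZ : s ⊆ Z := by
        rintro z ⟨hz1, _⟩
        exact ⟨hz1.1, fderiv_eq_zero_of_iteratedFDeriv_one (hz1.2 1 le_rfl (by omega)),
          hz1.2 (i + 1) (by omega) le_rfl⟩
      have hloc : ∀ p ∈ s, ∃ V : Set E, IsOpen V ∧ p ∈ V ∧ volume (g '' (Z ∩ V)) = 0 := by
        rintro p ⟨hp1, hp2⟩
        have hpU : p ∈ U := hp1.1
        have hex : ∃ m : Fin (i + 2) → E, iteratedFDeriv ℂ (i + 2) g p m ≠ 0 := by
          by_contra hcon
          push_neg at hcon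
          refine hp2 ⟨hpU, fun k h1 h2 => ?_⟩
          rcases Nat.lt_or_ge k (i + 2) with h | h
          · exact hp1.2 k h1 (by omega)
          · have : k = i + 2 := by omega
            rw [this]
            exact ContinuousMultilinearMap.ext fun m => hcon m
        obtain ⟨m, hm⟩ := hex
        exact stratum_local n IH E hrank hU hg i hpU hm
      choose! V hVopen hpV hVnull using hloc
      obtain ⟨t, hts, htc, hcov⟩ := TopologicalSpace.countable_cover_nhdsWithin
        (f := V) (s := s) (fun p hp => nhdsWithin_le_nhds ((hVopen p hp).mem_nhds (hpV p hp)))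
      have hsb : g '' s ⊆ ⋃ p ∈ t, g '' (Z ∩ V p) := by
        rintro c ⟨z, hz, rfl⟩
        obtain ⟨p, hpt, hzp⟩ := Set.mem_iUnion₂.mp (hcov hz)
        exact Set.mem_iUnion₂.mpr ⟨p, hpt, ⟨z, ⟨hsZ hz, hzp⟩, rfl⟩⟩
      refine measure_mono_null hsb ((measure_biUnion_null_iff htc).mpr ?_)
      exact fun p hpt => hVnull p (hts hpt)
    -- assemble
    have himg : g '' Cr ⊆ g '' Cinf ∪ ⋃ i : ℕ, g '' (Ci (i + 1) \ Ci (i + 2)) := by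
      refine (Set.image_mono hCr).trans ?_
      rw [Set.image_union, Set.image_iUnion]
    exact measure_mono_null himg
      (measure_union_null hAnull (measure_iUnion_null fun i => hBnull i))

theorem analyticAt_zpow {w : ℂ} (hw : w ≠ 0) (n : ℤ) :
    AnalyticAt ℂ (fun x : ℂ => x ^ n) w := by
  cases n with
  | ofNat k =>
    have h : AnalyticAt ℂ (fun x : ℂ => x ^ k) w := (analyticAt_id (𝕜 := ℂ) (E := ℂ) (z := w)).pow k
    simpa [zpow_natCast] using h
  | negSucc k =>
    have : (fun x : ℂ => x ^ Int.negSucc k) = fun x : ℂ => (x ^ (k + 1))⁻¹ := by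
      funext x; rw [zpow_negSucc]
    rw [this]
    exact ((analyticAt_id (𝕜 := ℂ) (E := ℂ) (z := w)).pow (k + 1)).inv (pow_ne_zero _ hw)

theorem analyticAt_monomial (s t : ℕ) (αi : Fin s → ℤ) (βi : Fin t → ℕ)
    {z : Fin (s + t) → ℂ} (hz : ∀ j, z (Fin.castAdd t j) ≠ 0) :
    AnalyticAt ℂ (fun w : Fin (s + t) → ℂ =>
      (∏ j, w (Fin.castAdd t j) ^ αi j) * ∏ j, w (Fin.natAdd s j) ^ βi j) z := by
  have hcoord : ∀ k : Fin (s + t), AnalyticAt ℂ (fun w : Fin (s + t) → ℂ => w k) z :=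
    fun k => (ContinuousLinearMap.proj (R := ℂ) (φ := fun _ : Fin (s + t) => ℂ) k).analyticAt z
  refine AnalyticAt.mul ?_ ?_
  · refine Finset.analyticAt_fun_prod _ fun j _ => ?_
    exact AnalyticAt.comp (f := fun w : Fin (s + t) → ℂ => w (Fin.castAdd t j))
      (analyticAt_zpow (hz j) (αi j)) (hcoord (Fin.castAdd t j))
  · exact Finset.analyticAt_fun_prod _ fun j _ => (hcoord (Fin.natAdd s j)).pow (βi j)

theorem clm_zero_of_basis {N : ℕ} (L : (Fin N → ℂ) →L[ℂ] ℂ)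
    (h : ∀ j, L (Pi.single j 1) = 0) : L = 0 := by
  ext v
  have hv : v = ∑ j, v j • (Pi.single j 1 : Fin N → ℂ) := by
    funext k
    rw [Finset.sum_apply]
    simp [Pi.single_apply, eq_comm]
  rw [hv]
  simp [h]

theorem IsCompact.inter_preimage' {X Y : Type*} [TopologicalSpace X] [TopologicalSpace Y]
    {K : Set X} (hK : IsCompact K) {f : X → Y} (hf : ContinuousOn f K) {C : Set Y}
    (hC : IsClosed C) : IsCompact (K ∩ f ⁻¹' C) := by
  have h1 : K ∩ f ⁻¹' C = Subtype.val '' ((K.restrict f) ⁻¹' C) := by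
    ext x
    simp only [Set.mem_inter_iff, Set.mem_image, Set.mem_preimage, Set.restrict_apply,
      Subtype.exists, exists_and_right, exists_eq_right]
    tauto
  rw [h1]
  have hcs : CompactSpace K := isCompact_iff_compactSpace.mp hK
  have hclosed : IsClosed ((K.restrict f) ⁻¹' C) :=
    hC.preimage (continuousOn_iff_continuous_restrict.mp hf)
  exact hclosed.isCompact.image continuous_subtype_val

theorem continuousOn_finset_sum' {ι X M : Type*} [TopologicalSpace X] [AddCommMonoid M]
    [TopologicalSpace M] [ContinuousAdd M] (u : Finset ι) {f : ι → X → M} {s : Set X}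
    (h : ∀ i ∈ u, ContinuousOn (f i) s) :
    ContinuousOn (fun x => ∑ i ∈ u, f i x) s := by
  classical
  induction u using Finset.induction_on with
  | empty => simpa using continuousOn_const
  | insert a u hni ih =>
    simp only [Finset.sum_insert hni]
    exact (h a (Finset.mem_insert_self a u)).add
      (ih fun i hi => h i (Finset.mem_insert_of_mem hi))

open MeasureTheory

/-- The Laurent-polynomial-type function
`f_a(z) = ∑ i, aᵢ · ∏_{j<s} z_j^{αᵢⱼ} · ∏_{j<t} z_{s+j}^{βᵢⱼ}`
on `ℂ^{s+t}`, with integer exponents on the first `s` coordinates. -/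
noncomputable def laurentFun (s t r : ℕ) (α : Fin (r + 1) → Fin s → ℤ)
    (β : Fin (r + 1) → Fin t → ℕ) (a : Fin (r + 1) → ℂ) (z : Fin (s + t) → ℂ) : ℂ :=
  ∑ i, a i * ((∏ j, z (Fin.castAdd t j) ^ α i j) * ∏ j, z (Fin.natAdd s j) ^ β i j)

/-- Generic smoothness for Laurent hypersurfaces on `(ℂ*)^s × ℂ^t`:
assuming the `0`-th monomial is invertible on `D` (i.e. `β₀ = 0`), the set of
coefficient vectors `a` for which `f_a` has a singular zero in `D` is contained in a
Borel set of Lebesgue measure zero. -/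
theorem generic_smoothness_of_laurent_hypersurfaces
    (s t r : ℕ) (α : Fin (r + 1) → Fin s → ℤ) (β : Fin (r + 1) → Fin t → ℕ)
    (hβ0 : β 0 = 0) :
    ∃ B : Set (Fin (r + 1) → ℂ), MeasurableSet B ∧ volume B = 0 ∧
      {a : Fin (r + 1) → ℂ | ∃ z : Fin (s + t) → ℂ,
          (∀ j : Fin s, z (Fin.castAdd t j) ≠ 0) ∧
          laurentFun s t r α β a z = 0 ∧
          ∀ j : Fin (s + t), fderiv ℂ (laurentFun s t r α β a) z (Pi.single j 1) = 0}
        ⊆ B := by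
  classical
  -- the domain D
  set D : Set (Fin (s + t) → ℂ) := {z | ∀ j : Fin s, z (Fin.castAdd t j) ≠ 0} with hDdef
  have hD : IsOpen D := by
    have hDeq : D = ⋂ j : Fin s,
        (fun z : Fin (s + t) → ℂ => z (Fin.castAdd t j)) ⁻¹' ({(0 : ℂ)}ᶜ) := by
      ext z; simp [hDdef]
    rw [hDeq]
    exact isOpen_iInter_of_finite fun j =>
      isOpen_compl_singleton.preimage (continuous_apply _)
  -- monomials
  set M : Fin (r + 1) → (Fin (s + t) → ℂ) → ℂ := fun i w =>
    (∏ j, w (Fin.castAdd t j) ^ α i j) * ∏ j, w (Fin.natAdd s j) ^ β i j with hMdef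
  have hMan : ∀ i, AnalyticOnNhd ℂ (M i) D := fun i z hz =>
    analyticAt_monomial s t (α i) (β i) hz
  have hM0ne : ∀ z ∈ D, M 0 z ≠ 0 := by
    intro z hz
    rw [hMdef]
    simp only [hβ0, Pi.zero_apply, pow_zero, Finset.prod_const_one, mul_one]
    exact Finset.prod_ne_zero_iff.mpr fun j _ => zpow_ne_zero _ (hz j)
  have hlfM : ∀ a, laurentFun s t r α β a = fun w => ∑ i, a i * M i w := fun a => rfl
  have hfa_an : ∀ a, AnalyticOnNhd ℂ (laurentFun s t r α β a) D := by
    intro a z hz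
    rw [hlfM]
    exact Finset.analyticAt_fun_sum _ fun i _ => analyticAt_const.mul (hMan i z hz)
  have hfderiv_eq : ∀ (a : Fin (r + 1) → ℂ) (z), z ∈ D →
      fderiv ℂ (laurentFun s t r α β a) z = ∑ i, a i • fderiv ℂ (M i) z := by
    intro a z hz
    rw [hlfM,
      fderiv_fun_sum (fun i _ => (hMan i z hz).differentiableAt.const_mul (a i))]
    exact Finset.sum_congr rfl fun i _ => fderiv_const_mul (hMan i z hz).differentiableAt (a i)
  -- the slice functions
  set g : (Fin r → ℂ) → (Fin (s + t) → ℂ) → ℂ := fun a' w =>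
    (-(∑ i : Fin r, a' i * M i.succ w)) * (M 0 w)⁻¹ with hgdef
  have hgan : ∀ a', AnalyticOnNhd ℂ (g a') D := by
    intro a' z hz
    exact ((Finset.analyticAt_fun_sum _ fun i _ =>
      analyticAt_const.mul (hMan i.succ z hz)).neg).mul ((hMan 0 z hz).inv (hM0ne z hz))
  -- the slice claim
  have hslice : ∀ (a : Fin (r + 1) → ℂ) (z), z ∈ D → laurentFun s t r α β a z = 0 →
      fderiv ℂ (laurentFun s t r α β a) z = 0 →
      g (fun i => a i.succ) z = a 0 ∧ fderiv ℂ (g (fun i => a i.succ)) z = 0 := by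
    intro a z hz hval hder
    have hM0 := hM0ne z hz
    have hvs : laurentFun s t r α β a z = a 0 * M 0 z + ∑ i : Fin r, a i.succ * M i.succ z := by
      rw [hlfM]; exact Fin.sum_univ_succ _
    constructor
    · rw [hgdef]
      have h1 : -∑ i : Fin r, a i.succ * M i.succ z = a 0 * M 0 z := by
        rw [hvs] at hval
        linear_combination -hval
      dsimp only
      rw [h1, mul_inv_cancel_right₀ hM0]
    · have hgeq : Set.EqOn (g (fun i => a i.succ))
          (fun w => a 0 - laurentFun s t r α β a w * (M 0 w)⁻¹) D := by
        intro w hw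
        have hM0w := hM0ne w hw
        rw [hgdef, hlfM]
        dsimp only
        rw [Fin.sum_univ_succ]
        field_simp
        ring
      have hev : g (fun i => a i.succ) =ᶠ[nhds z]
          fun w => a 0 - laurentFun s t r α β a w * (M 0 w)⁻¹ :=
        Filter.eventuallyEq_of_mem (hD.mem_nhds hz) hgeq
      rw [hev.fderiv_eq]
      have hdf : DifferentiableAt ℂ (laurentFun s t r α β a) z :=
        (hfa_an a z hz).differentiableAt
      have hdinv : DifferentiableAt ℂ (fun w => (M 0 w)⁻¹) z :=
        ((hMan 0 z hz).differentiableAt).inv hM0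
      rw [fderiv_const_sub, fderiv_fun_mul hdf hdinv, hval, hder]
      ext; simp
  -- null slices from the Sard-type theorem
  have hCV : ∀ a' : Fin r → ℂ,
      volume ((g a') '' {z | z ∈ D ∧ fderiv ℂ (g a') z = 0}) = 0 := by
    intro a'
    refine critval_null (s + t) (Fin (s + t) → ℂ) ?_ D hD (g a') (hgan a')
    simp [Module.finrank_pi]
  -- joint continuity data for the incidence set
  set G : (Fin (r + 1) → ℂ) × (Fin (s + t) → ℂ) → ℂ := fun p =>
    laurentFun s t r α β p.1 p.2 with hGdef
  set Gd : (Fin (r + 1) → ℂ) × (Fin (s + t) → ℂ) → ((Fin (s + t) → ℂ) →L[ℂ] ℂ) := fun p =>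
    ∑ i, p.1 i • fderiv ℂ (M i) p.2 with hGddef
  have hMdc : ∀ i, ContinuousOn (fun z => fderiv ℂ (M i) z) D := fun i =>
    ((hMan i).fderiv).continuousOn
  have hGdc : ContinuousOn Gd (Set.univ ×ˢ D) := by
    rw [hGddef]
    refine continuousOn_finset_sum' _ fun i _ => ContinuousOn.fun_smul ?_ ?_
    · exact ((continuous_apply i).comp continuous_fst).continuousOn
    · exact (hMdc i).comp continuous_snd.continuousOn fun p hp => hp.2
  have hGc : ContinuousOn G (Set.univ ×ˢ D) := by
    have hGeq : G = fun p => ∑ i, p.1 i * M i p.2 := rfl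
    rw [hGeq]
    refine continuousOn_finset_sum' _ fun i _ => ContinuousOn.mul ?_ ?_
    · exact ((continuous_apply i).comp continuous_fst).continuousOn
    · exact ((hMan i).continuousOn).comp continuous_snd.continuousOn fun p hp => hp.2
  -- compact exhaustion of the incidence set
  set Kq : ℕ → Set (Fin (s + t) → ℂ) := fun q =>
    Metric.closedBall 0 q ∩ ⋂ j : Fin s, {z | 1 / ((q : ℝ) + 1) ≤ ‖z (Fin.castAdd t j)‖}
    with hKqdef
  have hKqD : ∀ q, Kq q ⊆ D := by
    intro q z hz j
    have h1 : 1 / ((q : ℝ) + 1) ≤ ‖z (Fin.castAdd t j)‖ := by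
      have h2 := hz.2; rw [Set.mem_iInter] at h2; exact h2 j
    have h2 : (0 : ℝ) < 1 / ((q : ℝ) + 1) := by positivity
    intro h0
    rw [h0] at h1
    simp only [norm_zero] at h1
    linarith
  have hKqcomp : ∀ q, IsCompact (Kq q) := fun q =>
    (isCompact_closedBall _ _).inter_right (isClosed_iInter fun j =>
      isClosed_le continuous_const ((continuous_apply _).norm))
  set T : ℕ → Set ((Fin (r + 1) → ℂ) × (Fin (s + t) → ℂ)) := fun q =>
    (Metric.closedBall 0 q ×ˢ Kq q) ∩ (fun p => (G p, Gd p)) ⁻¹'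
      {((0 : ℂ), (0 : (Fin (s + t) → ℂ) →L[ℂ] ℂ))} with hTdef
  have hTcomp : ∀ q, IsCompact (T q) := by
    intro q
    have hsub : (Metric.closedBall (0 : Fin (r + 1) → ℂ) q ×ˢ Kq q) ⊆ Set.univ ×ˢ D :=
      fun p hp => ⟨trivial, hKqD q hp.2⟩
    exact ((isCompact_closedBall _ _).prod (hKqcomp q)).inter_preimage'
      ((hGc.mono hsub).prodMk (hGdc.mono hsub)) isClosed_singleton
  set B := ⋃ q : ℕ, Prod.fst '' T q with hBdef
  have hBmeas : MeasurableSet B :=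
    MeasurableSet.iUnion fun q => ((hTcomp q).image continuous_fst).measurableSet
  set S := {a : Fin (r + 1) → ℂ | ∃ z : Fin (s + t) → ℂ,
      (∀ j : Fin s, z (Fin.castAdd t j) ≠ 0) ∧
      laurentFun s t r α β a z = 0 ∧
      ∀ j : Fin (s + t), fderiv ℂ (laurentFun s t r α β a) z (Pi.single j 1) = 0} with hSdef
  have hBsubS : B ⊆ S := by
    rintro a haB
    obtain ⟨q, p, hpT, rfl⟩ := Set.mem_iUnion.mp haB
    obtain ⟨⟨hball, hKq⟩, hpre⟩ := hpT
    have hpair : G p = 0 ∧ Gd p = 0 := by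
      have := Set.mem_singleton_iff.mp hpre
      exact ⟨congrArg Prod.fst this, congrArg Prod.snd this⟩
    have hzD : p.2 ∈ D := hKqD q hKq
    refine ⟨p.2, hzD, hpair.1, fun j => ?_⟩
    have hfd : fderiv ℂ (laurentFun s t r α β p.1) p.2 = 0 := by
      rw [hfderiv_eq p.1 p.2 hzD]
      exact hpair.2
    rw [hfd]
    rfl
  have hSsubB : S ⊆ B := by
    rintro a ⟨z, hz, hval, hder⟩
    have hzD : z ∈ D := hz
    have hfd : fderiv ℂ (laurentFun s t r α β a) z = 0 := clm_zero_of_basis _ hder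
    have hGd0 : Gd (a, z) = 0 := by
      rw [hGddef]
      dsimp only
      rw [← hfderiv_eq a z hzD]
      exact hfd
    obtain ⟨δ, hδpos, hδle⟩ : ∃ δ : ℝ, 0 < δ ∧ ∀ j : Fin s, δ ≤ ‖z (Fin.castAdd t j)‖ := by
      rcases isEmpty_or_nonempty (Fin s) with hemp | hne
      · exact ⟨1, one_pos, fun j => isEmptyElim j⟩
      · refine ⟨Finset.univ.inf' Finset.univ_nonempty (fun j => ‖z (Fin.castAdd t j)‖), ?_, ?_⟩
        · rw [Finset.lt_inf'_iff]
          exact fun j _ => norm_pos_iff.mpr (hz j)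
        · exact fun j => Finset.inf'_le _ (Finset.mem_univ j)
    obtain ⟨q, hq⟩ := exists_nat_ge (max (max ‖a‖ ‖z‖) (1 / δ))
    have hqa : ‖a‖ ≤ q := le_trans (le_trans (le_max_left _ _) (le_max_left _ _)) hq
    have hqz : ‖z‖ ≤ q := le_trans (le_trans (le_max_right _ _) (le_max_left _ _)) hq
    have hqδ : 1 / δ ≤ (q : ℝ) := le_trans (le_max_right _ _) hq
    have hqinv : ∀ j : Fin s, 1 / ((q : ℝ) + 1) ≤ ‖z (Fin.castAdd t j)‖ := by
      intro j
      have h1 : 1 / δ ≤ (q : ℝ) + 1 := by linarith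
      have h2 : 1 / ((q : ℝ) + 1) ≤ δ := by
        rw [div_le_iff₀ (by positivity)]
        rw [div_le_iff₀ hδpos] at h1
        linarith
      exact le_trans h2 (hδle j)
    refine Set.mem_iUnion.mpr ⟨q, (a, z), ⟨⟨?_, ?_, ?_⟩, ?_⟩, rfl⟩
    · exact Metric.mem_closedBall.mpr (by simpa using hqa)
    · exact Metric.mem_closedBall.mpr (by simpa using hqz)
    · exact Set.mem_iInter.mpr fun j => hqinv j
    · have hG0 : G (a, z) = 0 := hval
      rw [Set.mem_preimage, Set.mem_singleton_iff, hG0, hGd0]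
  refine ⟨B, hBmeas, ?_, hSsubB⟩
  -- slices of S are contained in critical-value sets
  have hslicesub : ∀ a : Fin (r + 1) → ℂ, a ∈ S →
      a 0 ∈ (g (fun i => a i.succ)) ''
        {z | z ∈ D ∧ fderiv ℂ (g (fun i => a i.succ)) z = 0} := by
    rintro a ⟨z, hz, hval, hder⟩
    have hzD : z ∈ D := hz
    have hfd : fderiv ℂ (laurentFun s t r α β a) z = 0 := clm_zero_of_basis _ hder
    obtain ⟨hv, hd⟩ := hslice a z hzD hval hfd
    exact ⟨z, ⟨hzD, hd⟩, hv⟩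
  -- transfer to a product measure and use Fubini
  set e := MeasurableEquiv.piFinSuccAbove (fun _ : Fin (r + 1) => ℂ) 0 with hedef
  set B1 := e.symm ⁻¹' B with hB1def
  have hB1meas : MeasurableSet B1 := hBmeas.preimage e.symm.measurable
  have hvol1 : volume B1 = volume B :=
    ((volume_preserving_piFinSuccAbove (fun _ : Fin (r + 1) => ℂ) 0).symm).measure_preimage
      hBmeas.nullMeasurableSet
  set B2 : Set ((Fin r → ℂ) × ℂ) := Prod.swap ⁻¹' B1 with hB2def
  have hB2meas : MeasurableSet B2 := hB1meas.preimage measurable_swap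
  have hvol2 : volume B2 = volume B1 := by
    rw [Measure.volume_eq_prod, Measure.volume_eq_prod]
    exact Measure.measurePreserving_swap.measure_preimage hB1meas.nullMeasurableSet
  have hkey : ∀ a' : Fin r → ℂ, volume (Prod.mk a' ⁻¹' B2) = 0 := by
    intro a'
    refine measure_mono_null ?_ (hCV a')
    intro c hc
    have hcB : e.symm (c, a') ∈ B := hc
    have hcS : e.symm (c, a') ∈ S := hBsubS hcB
    have ha0 : (e.symm (c, a')) 0 = c := by
      rw [hedef]
      simp [MeasurableEquiv.piFinSuccAbove]
    have hsucc : (fun i : Fin r => (e.symm (c, a')) i.succ) = a' := by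
      funext i
      rw [hedef]
      simp [MeasurableEquiv.piFinSuccAbove]
    obtain ⟨zz, hz2, hval2⟩ := hslicesub _ hcS
    rw [hsucc] at hz2 hval2
    rw [ha0] at hval2
    exact ⟨zz, hz2, hval2⟩
  have hB2null : volume B2 = 0 := by
    rw [Measure.volume_eq_prod]
    rw [Measure.measure_prod_null hB2meas]
    exact Filter.Eventually.of_forall fun a' => hkey a'
  rw [← hvol1, ← hvol2]
  exact hB2null
end

section
/- Let Δ ⊆ ℝ⁴ be a reflexive polytope, let w₁, …, w₅ ∈ Δ ∩ ℤ⁴, and let b₁, …, b₅ be positive integers with b₁w₁ + b₂w₂ + b₃w₃ = b₄w₄ + b₅w₅. If w₁, w₂, w₃ lie in a common proper face of Δ and w₄, w₅ lie in a common proper face of Δ, then b₁ + b₂ + b₃ = b₄ + b₅ and w₁, w₂, w₃, w₄, w₅ all lie in a common proper face of Δ. -/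
open Pointwise

/-- The standard pairing `⟨m,n⟩ = ∑ i, mᵢ nᵢ` on `ℝ^d`. -/
def pairing {d : ℕ} (m n : Fin d → ℝ) : ℝ := ∑ i, m i * n i

/-- A point of `ℝ^d` is a lattice point if all coordinates are integers. -/
def IsLatticePt {d : ℕ} (v : Fin d → ℝ) : Prop := ∀ i, ∃ n : ℤ, v i = (n : ℝ)

/-- The set of lattice points of `ℝ^d`. -/
def latticePts (d : ℕ) : Set (Fin d → ℝ) := {v | IsLatticePt v}

/-- A lattice polytope is the convex hull of finitely many lattice points. -/
def IsLatticePolytope {d : ℕ} (Δ : Set (Fin d → ℝ)) : Prop :=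
  ∃ S : Finset (Fin d → ℝ), (S : Set (Fin d → ℝ)) ⊆ latticePts d ∧
    Δ = convexHull ℝ (S : Set (Fin d → ℝ))

/-- The dual polytope `Δ* = {m : ⟨m,n⟩ ≥ -1 for all n ∈ Δ}`. -/
def dualPolytope {d : ℕ} (Δ : Set (Fin d → ℝ)) : Set (Fin d → ℝ) :=
  {m | ∀ n ∈ Δ, -1 ≤ pairing m n}

/-- A reflexive polytope: a lattice polytope with `0` in its interior
whose dual polytope is again a lattice polytope. -/
def IsReflexive {d : ℕ} (Δ : Set (Fin d → ℝ)) : Prop :=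
  IsLatticePolytope Δ ∧ (0 : Fin d → ℝ) ∈ interior Δ ∧ IsLatticePolytope (dualPolytope Δ)

/-- `Cone(v₁,…,v_k) = {r₁v₁ + ⋯ + r_kv_k : rᵢ ≥ 0}`. -/
def coneOf {d k : ℕ} (v : Fin k → (Fin d → ℝ)) : Set (Fin d → ℝ) :=
  {x | ∃ r : Fin k → ℝ, (∀ i, 0 ≤ r i) ∧ x = ∑ i, r i • v i}

/-- `r·∂Δ`, the frontier (topological boundary) of the dilate `rΔ`. -/
def bdry {d : ℕ} (r : ℝ) (Δ : Set (Fin d → ℝ)) : Set (Fin d → ℝ) := frontier (r • Δ)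

/-- The points of `S` lie in a common proper face of `Δ`: there is `u` with
`⟨u,x⟩ ≤ 1` on `Δ` and `⟨u,v⟩ = 1` for all `v ∈ S`. -/
def InCommonFace {d : ℕ} (Δ : Set (Fin d → ℝ)) (S : Set (Fin d → ℝ)) : Prop :=
  ∃ u : Fin d → ℝ, (∀ x ∈ Δ, pairing u x ≤ 1) ∧ ∀ v ∈ S, pairing u v = 1

/-- Coordinatewise cast of an integer vector to a real vector. -/
def toRealVec {d : ℕ} (n : Fin d → ℤ) : Fin d → ℝ := fun i => (n i : ℝ)

lemma pairing_add (u x y : Fin 4 → ℝ) :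
    pairing u (x + y) = pairing u x + pairing u y := by
  simp [pairing, mul_add, Finset.sum_add_distrib]

lemma pairing_smul (u x : Fin 4 → ℝ) (a : ℝ) :
    pairing u (a • x) = a * pairing u x := by
  simp [pairing, Finset.mul_sum, mul_left_comm]

/-- If `w₁,…,w₅` are lattice points of a reflexive 4-polytope `Δ`
with `b₁w₁+b₂w₂+b₃w₃ = b₄w₄+b₅w₅` for positive integers `bᵢ`, and `w₁,w₂,w₃` lie in a
common proper face while `w₄,w₅` lie in a common proper face, then `b₁+b₂+b₃ = b₄+b₅`
and all five points lie in a common proper face of `Δ`. -/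
theorem five_circuit_common_face
    (Δ : Set (Fin 4 → ℝ)) (hΔ : IsReflexive Δ)
    (w : Fin 5 → (Fin 4 → ℝ))
    (hwΔ : ∀ i, w i ∈ Δ) (hwL : ∀ i, IsLatticePt (w i))
    (b : Fin 5 → ℤ) (hb : ∀ i, 0 < b i)
    (hrel : (b 0 : ℝ) • w 0 + (b 1 : ℝ) • w 1 + (b 2 : ℝ) • w 2
      = (b 3 : ℝ) • w 3 + (b 4 : ℝ) • w 4)
    (hface123 : InCommonFace Δ {w 0, w 1, w 2})
    (hface45 : InCommonFace Δ {w 3, w 4}) :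
    b 0 + b 1 + b 2 = b 3 + b 4 ∧ InCommonFace Δ (Set.range w) := by
  obtain ⟨u, huΔ, huS⟩ := hface123
  obtain ⟨u', hu'Δ, hu'S⟩ := hface45
  have h0 : pairing u (w 0) = 1 := huS _ (by simp)
  have h1 : pairing u (w 1) = 1 := huS _ (by simp)
  have h2 : pairing u (w 2) = 1 := huS _ (by simp)
  have h3' : pairing u' (w 3) = 1 := hu'S _ (by simp)
  have h4' : pairing u' (w 4) = 1 := hu'S _ (by simp)
  have key : ∀ v : Fin 4 → ℝ, pairing v ((b 0 : ℝ) • w 0 + (b 1 : ℝ) • w 1 + (b 2 : ℝ) • w 2)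
      = (b 0 : ℝ) * pairing v (w 0) + (b 1 : ℝ) * pairing v (w 1) + (b 2 : ℝ) * pairing v (w 2) := by
    intro v; rw [pairing_add, pairing_add, pairing_smul, pairing_smul, pairing_smul]
  have key2 : ∀ v : Fin 4 → ℝ, pairing v ((b 3 : ℝ) • w 3 + (b 4 : ℝ) • w 4)
      = (b 3 : ℝ) * pairing v (w 3) + (b 4 : ℝ) * pairing v (w 4) := by
    intro v; rw [pairing_add, pairing_smul, pairing_smul]
  have eq1 : (b 0 : ℝ) + b 1 + b 2 = (b 3 : ℝ) * pairing u (w 3) + (b 4 : ℝ) * pairing u (w 4) := by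
    have := key u; rw [hrel, key2] at this
    rw [h0, h1, h2] at this; linarith
  have eq2 : (b 0 : ℝ) * pairing u' (w 0) + (b 1 : ℝ) * pairing u' (w 1)
      + (b 2 : ℝ) * pairing u' (w 2) = (b 3 : ℝ) + b 4 := by
    have := key u'; rw [hrel, key2] at this
    rw [h3', h4'] at this; linarith
  have hbpos : ∀ i, (0 : ℝ) < b i := fun i => by exact_mod_cast hb i
  have hle1 : ∀ i, pairing u (w i) ≤ 1 := fun i => huΔ _ (hwΔ i)
  have hle1' : ∀ i, pairing u' (w i) ≤ 1 := fun i => hu'Δ _ (hwΔ i)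
  have sumle : (b 3 : ℝ) + b 4 ≤ (b 0 : ℝ) + b 1 + b 2 := by
    have := hle1' 0; have := hle1' 1; have := hle1' 2
    nlinarith [eq2, hbpos 0, hbpos 1, hbpos 2]
  have h3 : pairing u (w 3) = 1 := by
    nlinarith [hle1 3, hle1 4, hbpos 3, hbpos 4, eq1, sumle]
  have h4 : pairing u (w 4) = 1 := by
    nlinarith [hle1 3, hle1 4, hbpos 3, hbpos 4, eq1, sumle]
  constructor
  · have : (b 0 : ℝ) + b 1 + b 2 = (b 3 : ℝ) + b 4 := by rw [eq1, h3, h4]; ring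
    exact_mod_cast this
  · refine ⟨u, huΔ, ?_⟩
    rintro v ⟨i, rfl⟩
    fin_cases i <;> assumption
end

section
/- Let Δ ⊆ ℝ⁴ be a reflexive polytope and let w₁, …, w₅ ∈ Δ ∩ ℤ⁴ satisfy w₁ + w₂ + w₃ + w₄ + w₅ ∈ 4·∂Δ. Then for all distinct indices i, j, k, ℓ ∈ {1, …, 5}, the sum wᵢ + wⱼ + w_k + w_ℓ lies in 3·∂Δ ∪ 4·∂Δ. -/
open Pointwise

/- ### Auxiliary lemmas -/

lemma pairing_add_right {d : ℕ} (m x y : Fin d → ℝ) :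
    pairing m (x + y) = pairing m x + pairing m y := by
  unfold pairing
  rw [← Finset.sum_add_distrib]
  exact Finset.sum_congr rfl fun i _ => by simp [mul_add]

lemma pairing_sub_right {d : ℕ} (m x y : Fin d → ℝ) :
    pairing m (x - y) = pairing m x - pairing m y := by
  unfold pairing
  rw [← Finset.sum_sub_distrib]
  exact Finset.sum_congr rfl fun i _ => by simp [mul_sub]

lemma pairing_smul_right {d : ℕ} (m : Fin d → ℝ) (c : ℝ) (x : Fin d → ℝ) :
    pairing m (c • x) = c * pairing m x := by
  unfold pairing
  rw [Finset.mul_sum]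
  exact Finset.sum_congr rfl fun i _ => by simp [Pi.smul_apply, smul_eq_mul]; ring

lemma pairing_continuous {d : ℕ} (m : Fin d → ℝ) :
    Continuous fun x : Fin d → ℝ => pairing m x := by
  unfold pairing
  exact continuous_finset_sum _ fun i _ => continuous_const.mul (continuous_apply i)

lemma pairing_left_linear {d : ℕ} (x : Fin d → ℝ) :
    IsLinearMap ℝ fun m : Fin d → ℝ => pairing m x := by
  constructor
  · intro a b
    unfold pairing
    rw [← Finset.sum_add_distrib]
    exact Finset.sum_congr rfl fun i _ => by simp [add_mul]
  · intro c a
    unfold pairing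
    rw [smul_eq_mul, Finset.mul_sum]
    exact Finset.sum_congr rfl fun i _ => by simp [smul_eq_mul]; ring

lemma pairing_int {d : ℕ} {m v : Fin d → ℝ} (hm : IsLatticePt m) (hv : IsLatticePt v) :
    ∃ k : ℤ, pairing m v = (k : ℝ) := by
  choose a ha using hm
  choose b hb using hv
  refine ⟨∑ i, a i * b i, ?_⟩
  unfold pairing
  push_cast
  exact Finset.sum_congr rfl fun i _ => by rw [ha, hb]

lemma pairing_zero_left {d : ℕ} (x : Fin d → ℝ) : pairing (0 : Fin d → ℝ) x = 0 := by
  simp [pairing]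

/-- The bipolar theorem: a point with `⟨m,x⟩ ≥ -1` for all `m ∈ Δ*` lies in `Δ`. -/
lemma bipolar {d : ℕ} {Δ : Set (Fin d → ℝ)} (hconv : Convex ℝ Δ) (hclosed : IsClosed Δ)
    (h0 : (0 : Fin d → ℝ) ∈ Δ) {x : Fin d → ℝ}
    (hx : ∀ m ∈ dualPolytope Δ, -1 ≤ pairing m x) : x ∈ Δ := by
  by_contra hxe
  obtain ⟨f, u, hfa, hux⟩ := geometric_hahn_banach_closed_point hconv hclosed hxe
  have hu : 0 < u := by simpa using hfa 0 h0
  set g : Fin d → ℝ := fun i => -(f (fun j => if i = j then (1:ℝ) else 0) / u) with hg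
  have hrep : ∀ y : Fin d → ℝ, pairing g y = -(f y / u) := by
    intro y
    have h1 : f y = ∑ i, y i * f (fun j => if i = j then (1:ℝ) else 0) := by
      conv_lhs => rw [pi_eq_sum_univ y]
      rw [map_sum]
      exact Finset.sum_congr rfl fun i _ => by rw [map_smul, smul_eq_mul]
    rw [h1, Finset.sum_div, ← Finset.sum_neg_distrib]
    unfold pairing
    exact Finset.sum_congr rfl fun i _ => by rw [hg]; ring
  have hgdual : g ∈ dualPolytope Δ := by
    intro n hn
    rw [hrep n]
    have h2 : f n / u ≤ 1 := (div_le_one hu).2 (le_of_lt (hfa n hn))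
    linarith
  have h3 := hx g hgdual
  rw [hrep x] at h3
  have h4 : (1:ℝ) < f x / u := (one_lt_div hu).2 hux
  linarith

/-- Membership in the dilate `r • Δ` via the dual polytope. -/
lemma mem_smul_iff {d : ℕ} {Δ : Set (Fin d → ℝ)} (hconv : Convex ℝ Δ) (hclosed : IsClosed Δ)
    (h0 : (0 : Fin d → ℝ) ∈ Δ) {r : ℝ} (hr : 0 < r) (x : Fin d → ℝ) :
    x ∈ r • Δ ↔ ∀ m ∈ dualPolytope Δ, -r ≤ pairing m x := by
  constructor
  · rintro ⟨y, hy, rfl⟩ m hm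
    rw [pairing_smul_right]
    have := hm y hy
    nlinarith
  · intro h
    have hmem : r⁻¹ • x ∈ Δ := by
      apply bipolar hconv hclosed h0
      intro m hm
      rw [pairing_smul_right]
      have h1 := h m hm
      have h2 : r⁻¹ * (-r) ≤ r⁻¹ * pairing m x :=
        mul_le_mul_of_nonneg_left h1 (le_of_lt (inv_pos.2 hr))
      have h3 : r⁻¹ * (-r) = -1 := by field_simp
      linarith
    have h4 := Set.smul_mem_smul_set (a := r) hmem
    rwa [smul_inv_smul₀ (ne_of_gt hr)] at h4

/-- If a point pairs strictly above `-r` with every generator of the dual polytope,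
it lies in the interior of `r • Δ`. -/
lemma mem_interior_smul_of {d : ℕ} {Δ : Set (Fin d → ℝ)} (hconv : Convex ℝ Δ)
    (hclosed : IsClosed Δ) (h0 : (0 : Fin d → ℝ) ∈ Δ)
    {S' : Finset (Fin d → ℝ)} (hdual : dualPolytope Δ = convexHull ℝ (S' : Set (Fin d → ℝ)))
    {r : ℝ} (hr : 0 < r) {x : Fin d → ℝ} (h : ∀ m ∈ S', -r < pairing m x) :
    x ∈ interior (r • Δ) := by
  have hUeq : {y : Fin d → ℝ | ∀ m ∈ S', -r < pairing m y}
      = ⋂ m ∈ S', {y | -r < pairing m y} := by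
    ext y; simp
  have hU : IsOpen {y : Fin d → ℝ | ∀ m ∈ S', -r < pairing m y} := by
    rw [hUeq]
    exact isOpen_biInter_finset fun m _ => isOpen_lt continuous_const (pairing_continuous m)
  have hsub : {y : Fin d → ℝ | ∀ m ∈ S', -r < pairing m y} ⊆ r • Δ := by
    intro y hy
    apply (mem_smul_iff hconv hclosed h0 hr y).2
    intro m hm
    rw [hdual] at hm
    have hhalf : convexHull ℝ (S' : Set (Fin d → ℝ)) ⊆ {m | -r ≤ pairing m y} :=
      convexHull_min (fun m' hm' => le_of_lt (hy m' hm'))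
        (convex_halfSpace_ge (pairing_left_linear y) (-r))
    exact hhalf hm
  exact hU.subset_interior_iff.2 hsub h

/-- If `⟨m,x⟩ ≤ -r` for some nonzero `m ∈ Δ*`, then `x` is not interior to `r • Δ`. -/
lemma not_mem_interior_smul {d : ℕ} {Δ : Set (Fin d → ℝ)} {r : ℝ} (hr : 0 < r)
    {m x : Fin d → ℝ} (hm : m ∈ dualPolytope Δ) (hm0 : m ≠ 0) (hx : pairing m x ≤ -r) :
    x ∉ interior (r • Δ) := by
  intro hint
  rw [mem_interior_iff_mem_nhds, Metric.mem_nhds_iff] at hint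
  obtain ⟨ε, hε, hball⟩ := hint
  have hmm : 0 < pairing m m := by
    obtain ⟨i0, hi0⟩ : ∃ i0, m i0 ≠ 0 := by
      by_contra hc; push_neg at hc; exact hm0 (funext hc)
    unfold pairing
    exact Finset.sum_pos' (fun j _ => mul_self_nonneg (m j))
      ⟨i0, Finset.mem_univ i0, mul_self_pos.2 hi0⟩
  set δ := ε / (2 * (‖m‖ + 1)) with hδdef
  have hδ : 0 < δ := div_pos hε (by positivity)
  have hnorm : ‖δ • m‖ < ε := by
    rw [norm_smul, Real.norm_eq_abs, abs_of_pos hδ, hδdef, div_mul_eq_mul_div,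
      div_lt_iff₀ (by positivity)]
    nlinarith [norm_nonneg m]
  have hyball : x - δ • m ∈ Metric.ball x ε := by
    rw [Metric.mem_ball, dist_eq_norm]
    simpa using hnorm
  obtain ⟨z, hz, hzeq⟩ := hball hyball
  have h1 : -r ≤ pairing m (x - δ • m) := by
    rw [← hzeq, pairing_smul_right]
    have := hm z hz
    nlinarith
  rw [pairing_sub_right, pairing_smul_right] at h1
  nlinarith

lemma mem_frontier_of_mem {α : Type*} [TopologicalSpace α] {s : Set α} {x : α}
    (hx : x ∈ s) (hni : x ∉ interior s) : x ∈ frontier s :=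
  ⟨subset_closure hx, hni⟩

/-- If `w₁,…,w₅` are lattice points of a reflexive 4-polytope `Δ`
with `w₁+⋯+w₅ ∈ 4·∂Δ`, then every sum of four distinct `wᵢ`'s lies in `3·∂Δ ∪ 4·∂Δ`. -/
theorem four_sums_good_of_five_sum_in_four_boundary
    (Δ : Set (Fin 4 → ℝ)) (hΔ : IsReflexive Δ)
    (w : Fin 5 → (Fin 4 → ℝ))
    (hwΔ : ∀ i, w i ∈ Δ) (hwL : ∀ i, IsLatticePt (w i))
    (hsum : (∑ i, w i) ∈ bdry 4 Δ) :
    ∀ i j k l : Fin 5, i ≠ j → i ≠ k → i ≠ l → j ≠ k → j ≠ l → k ≠ l →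
      w i + w j + w k + w l ∈ bdry 3 Δ ∪ bdry 4 Δ := by
  obtain ⟨⟨S, hSlat, hSeq⟩, h0int, ⟨S', hS'lat, hS'eq⟩⟩ := hΔ
  have hcomp : IsCompact Δ := hSeq ▸ S.finite_toSet.isCompact_convexHull (𝕜 := ℝ)
  have hclosed : IsClosed Δ := hcomp.isClosed
  have hconv : Convex ℝ Δ := hSeq ▸ convex_convexHull ℝ _
  have h0 : (0 : Fin 4 → ℝ) ∈ Δ := interior_subset h0int
  have hS'dual : ∀ m ∈ S', m ∈ dualPolytope Δ := fun m hm => by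
    rw [hS'eq]; exact subset_convexHull ℝ _ hm
  -- the five-fold sum
  have hfr : (∑ i, w i) ∈ frontier ((4:ℝ) • Δ) := hsum
  have hSumclosed : IsClosed ((4:ℝ) • Δ) := (hcomp.smul (4:ℝ)).isClosed
  have hSummem : (∑ i, w i) ∈ (4:ℝ) • Δ := by
    have := hfr.1
    rwa [hSumclosed.closure_eq] at this
  have hSumni : (∑ i, w i) ∉ interior ((4:ℝ) • Δ) := hfr.2
  -- find a lattice generator of the dual achieving the bound -4 on the five-fold sum
  have hm0ex : ∃ m0 ∈ S', pairing m0 (∑ i, w i) ≤ -4 := by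
    by_contra hcon
    push_neg at hcon
    exact hSumni (mem_interior_smul_of hconv hclosed h0 hS'eq (by norm_num) hcon)
  obtain ⟨m0, hm0S, hm0le⟩ := hm0ex
  have hm0dual : m0 ∈ dualPolytope Δ := hS'dual m0 hm0S
  have hm0ge : -(4:ℝ) ≤ pairing m0 (∑ i, w i) :=
    (mem_smul_iff hconv hclosed h0 (by norm_num) _).1 hSummem m0 hm0dual
  have hm0eq : pairing m0 (∑ i, w i) = -4 := le_antisymm hm0le hm0ge
  have hm0ne : m0 ≠ 0 := by
    intro h
    rw [h, pairing_zero_left] at hm0eq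
    norm_num at hm0eq
  -- now the four-fold sums
  intro i j k l hij hik hil hjk hjl hkl
  classical
  set s4 : Finset (Fin 5) := {j, k, l} with hs4
  have hnij : i ∉ ({j, k, l} : Finset (Fin 5)) := by simp [hij, hik, hil]
  have hnjk : j ∉ ({k, l} : Finset (Fin 5)) := by simp [hjk, hjl]
  have hnkl : k ∉ ({l} : Finset (Fin 5)) := by simp [hkl]
  have hcard : ({i, j, k, l} : Finset (Fin 5)).card = 4 := by
    rw [Finset.card_insert_of_notMem hnij, Finset.card_insert_of_notMem hnjk,
      Finset.card_insert_of_notMem hnkl, Finset.card_singleton]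
  have hccard : (({i, j, k, l} : Finset (Fin 5))ᶜ).card = 1 := by
    rw [Finset.card_compl, hcard]
    rfl
  obtain ⟨a5, ha5⟩ := Finset.card_eq_one.1 hccard
  have hsum4 : ∑ a ∈ ({i, j, k, l} : Finset (Fin 5)), w a = w i + w j + w k + w l := by
    rw [Finset.sum_insert hnij, Finset.sum_insert hnjk, Finset.sum_insert hnkl,
      Finset.sum_singleton]
    abel
  have hsplit : (∑ a, w a) = (w i + w j + w k + w l) + w a5 := by
    have h1 := Finset.sum_add_sum_compl ({i, j, k, l} : Finset (Fin 5)) w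
    rw [ha5, Finset.sum_singleton, hsum4] at h1
    exact h1.symm
  -- integrality of pairings with lattice points of the dual
  have hint4 : ∀ m ∈ S', ∃ km : ℤ, pairing m (w i + w j + w k + w l) = (km : ℝ) := by
    intro m hm
    have hmlat : IsLatticePt m := hS'lat hm
    obtain ⟨a, ha⟩ := pairing_int hmlat (hwL i)
    obtain ⟨b, hb⟩ := pairing_int hmlat (hwL j)
    obtain ⟨c, hc⟩ := pairing_int hmlat (hwL k)
    obtain ⟨e, he⟩ := pairing_int hmlat (hwL l)
    exact ⟨a + b + c + e, by
      rw [pairing_add_right, pairing_add_right, pairing_add_right, ha, hb, hc, he]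
      push_cast
      ring⟩
  -- the four-fold sum lies in 4Δ
  have hx4mem4 : w i + w j + w k + w l ∈ (4:ℝ) • Δ := by
    apply (mem_smul_iff hconv hclosed h0 (by norm_num) _).2
    intro m hm
    rw [pairing_add_right, pairing_add_right, pairing_add_right]
    have h1 := hm (w i) (hwΔ i)
    have h2 := hm (w j) (hwΔ j)
    have h3 := hm (w k) (hwΔ k)
    have h4 := hm (w l) (hwΔ l)
    linarith
  -- value of pairing m0 on the four-fold sum
  have hx4le : pairing m0 (w i + w j + w k + w l) ≤ -3 := by
    have h5 := hm0dual (w a5) (hwΔ a5)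
    rw [hsplit, pairing_add_right] at hm0eq
    linarith
  by_cases hcase : ∃ m ∈ S', pairing m (w i + w j + w k + w l) ≤ -4
  · right
    obtain ⟨m1, hm1S, hm1le⟩ := hcase
    have hm1ne : m1 ≠ 0 := by
      intro h
      rw [h, pairing_zero_left] at hm1le
      norm_num at hm1le
    exact mem_frontier_of_mem hx4mem4
      (not_mem_interior_smul (by norm_num) (hS'dual m1 hm1S) hm1ne hm1le)
  · left
    push_neg at hcase
    have hge3 : ∀ m ∈ S', -3 ≤ pairing m (w i + w j + w k + w l) := by
      intro m hm
      obtain ⟨km, hkm⟩ := hint4 m hm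
      have h1 := hcase m hm
      rw [hkm] at h1 ⊢
      have h2 : (-4 : ℤ) < km := by exact_mod_cast h1
      have h3 : (-3 : ℤ) ≤ km := by omega
      exact_mod_cast h3
    have hall : ∀ m ∈ dualPolytope Δ, -3 ≤ pairing m (w i + w j + w k + w l) := by
      intro m hm
      rw [hS'eq] at hm
      have hhalf : convexHull ℝ (S' : Set (Fin 4 → ℝ))
          ⊆ {m | -3 ≤ pairing m (w i + w j + w k + w l)} :=
        convexHull_min hge3 (convex_halfSpace_ge (pairing_left_linear _) (-3))
      exact hhalf hm
    have hx4mem3 : w i + w j + w k + w l ∈ (3:ℝ) • Δ :=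
      (mem_smul_iff hconv hclosed h0 (by norm_num) _).2 hall
    exact mem_frontier_of_mem hx4mem3
      (not_mem_interior_smul (by norm_num) hm0dual hm0ne hx4le)
end
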